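/- Let γ : ℝ → ℝ² be a smooth unit-speed self-shrinking curve, and define the operator Lf = f″ − ½⟨γ, γ′⟩f′ + (H² + ½)f for functions f : ℝ → ℝ. Then L H = H, i.e. H″ − ½⟨γ,γ′⟩H′ + (H² + ½)H = H, and for every constant vector v ∈ ℝ² the function f(t) = ⟨v, n(t)⟩ satisfies L f = ½ f. -/

import Mathlib

noncomputable section
open Real MeasureTheory
open scoped RealInnerProductSpace

abbrev E2 := EuclideanSpace ℝ (Fin 2)

/-- The unit normal of a unit-speed plane curve: `γ′` rotated by `−π/2`. -/
def normal (γ : ℝ → E2) (t : ℝ) : E2 := WithLp.toLp 2 ![deriv γ t 1, -(deriv γ t 0)]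

/-- The curvature `H = −⟨γ″, n⟩` of a unit-speed plane curve. -/
def curv (γ : ℝ → E2) (t : ℝ) : ℝ := -⟪deriv (deriv γ) t, normal γ t⟫

/-- The stability operator `L f = f″ − ½⟨γ, γ′⟩ f′ + (H² + ½) f` along a plane curve. -/
def Lop (γ : ℝ → E2) (f : ℝ → ℝ) (t : ℝ) : ℝ :=
  deriv (deriv f) t - (1/2) * ⟪γ t, deriv γ t⟫ * deriv f t + (curv γ t ^ 2 + 1/2) * f t

lemma deriv_proj (φ : ℝ → E2) (i : Fin 2) (t : ℝ) (h : DifferentiableAt ℝ φ t) :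
    deriv (fun s => φ s i) t = deriv φ t i := by
  have := ((EuclideanSpace.proj i : E2 →L[ℝ] ℝ).hasFDerivAt.comp_hasDerivAt t h.hasDerivAt)
  simpa [Function.comp_def] using this.deriv


lemma core (x0 x1 : ℝ → ℝ) (h0 : ContDiff ℝ (⊤:ℕ∞) x0) (h1 : ContDiff ℝ (⊤:ℕ∞) x1)
    (hu : ∀ t, deriv x0 t ^ 2 + deriv x1 t ^ 2 = 1)
    (hs : ∀ t, deriv (deriv x1) t * deriv x0 t - deriv (deriv x0) t * deriv x1 t
            = (x0 t * deriv x1 t - x1 t * deriv x0 t) / 2) :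
    (∀ t, deriv (deriv (fun s => deriv (deriv x1) s * deriv x0 s - deriv (deriv x0) s * deriv x1 s)) t
        - (1/2) * (x0 t * deriv x0 t + x1 t * deriv x1 t)
            * deriv (fun s => deriv (deriv x1) s * deriv x0 s - deriv (deriv x0) s * deriv x1 s) t
        + ((deriv (deriv x1) t * deriv x0 t - deriv (deriv x0) t * deriv x1 t) ^ 2 + 1/2)
            * (deriv (deriv x1) t * deriv x0 t - deriv (deriv x0) t * deriv x1 t)
        = deriv (deriv x1) t * deriv x0 t - deriv (deriv x0) t * deriv x1 t) ∧
    (∀ v0 v1 t, deriv (deriv (fun s => v0 * deriv x1 s - v1 * deriv x0 s)) t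
        - (1/2) * (x0 t * deriv x0 t + x1 t * deriv x1 t)
            * deriv (fun s => v0 * deriv x1 s - v1 * deriv x0 s) t
        + ((deriv (deriv x1) t * deriv x0 t - deriv (deriv x0) t * deriv x1 t) ^ 2 + 1/2)
            * (v0 * deriv x1 t - v1 * deriv x0 t)
        = (1/2) * (v0 * deriv x1 t - v1 * deriv x0 t)) := by
  have h0' : Differentiable ℝ x0 := h0.differentiable (by simp)
  have h1' : Differentiable ℝ x1 := h1.differentiable (by simp)
  have hτ0s : ContDiff ℝ (⊤:ℕ∞) (deriv x0) := (contDiff_infty_iff_deriv.mp h0).2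
  have hτ1s : ContDiff ℝ (⊤:ℕ∞) (deriv x1) := (contDiff_infty_iff_deriv.mp h1).2
  have ha0s : ContDiff ℝ (⊤:ℕ∞) (deriv (deriv x0)) := (contDiff_infty_iff_deriv.mp hτ0s).2
  have ha1s : ContDiff ℝ (⊤:ℕ∞) (deriv (deriv x1)) := (contDiff_infty_iff_deriv.mp hτ1s).2
  set τ0 := deriv x0 with hτ0def
  set τ1 := deriv x1 with hτ1def
  set a0 := deriv τ0 with ha0def
  set a1 := deriv τ1 with ha1def
  have Dx0 : ∀ t, HasDerivAt x0 (τ0 t) t := fun t => (h0' t).hasDerivAt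
  have Dx1 : ∀ t, HasDerivAt x1 (τ1 t) t := fun t => (h1' t).hasDerivAt
  have Dτ0 : ∀ t, HasDerivAt τ0 (a0 t) t := fun t => ((hτ0s.differentiable (by simp)) t).hasDerivAt
  have Dτ1 : ∀ t, HasDerivAt τ1 (a1 t) t := fun t => ((hτ1s.differentiable (by simp)) t).hasDerivAt
  have Da0 : ∀ t, HasDerivAt a0 (deriv a0 t) t := fun t => ((ha0s.differentiable (by simp)) t).hasDerivAt
  have Da1 : ∀ t, HasDerivAt a1 (deriv a1 t) t := fun t => ((ha1s.differentiable (by simp)) t).hasDerivAt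
  -- orthogonality of acceleration and velocity
  have orth : ∀ t, τ0 t * a0 t + τ1 t * a1 t = 0 := by
    intro t
    have h2 : HasDerivAt (fun s => τ0 s ^ 2 + τ1 s ^ 2)
        (((2:ℕ) * τ0 t ^ 1 * a0 t) + ((2:ℕ) * τ1 t ^ 1 * a1 t)) t :=
      ((Dτ0 t).pow 2).add ((Dτ1 t).pow 2)
    have h3 : (fun s => τ0 s ^ 2 + τ1 s ^ 2) = fun _ => (1:ℝ) := funext hu
    rw [h3] at h2
    have h4 := h2.unique (hasDerivAt_const t 1)
    push_cast at h4
    nlinarith [h4]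
  -- acceleration in terms of curvature and normal
  have ha0 : ∀ t, a0 t = -(a1 t * τ0 t - a0 t * τ1 t) * τ1 t := by
    intro t
    linear_combination (-(a0 t)) * hu t + (τ0 t) * orth t
  have ha1 : ∀ t, a1 t = (a1 t * τ0 t - a0 t * τ1 t) * τ0 t := by
    intro t
    linear_combination (-(a1 t)) * hu t + (τ1 t) * orth t
  have hPa : ∀ t, x0 t * a0 t + x1 t * a1 t = -2 * (a1 t * τ0 t - a0 t * τ1 t) ^ 2 := by
    intro t
    linear_combination (x0 t) * ha0 t + (x1 t) * ha1 t
      + (2 * (a1 t * τ0 t - a0 t * τ1 t)) * hs t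
  -- first derivative of H
  have DH : ∀ t, HasDerivAt (fun s => a1 s * τ0 s - a0 s * τ1 s)
      (deriv a1 t * τ0 t + a1 t * a0 t - (deriv a0 t * τ1 t + a0 t * a1 t)) t :=
    fun t => ((Da1 t).mul (Dτ0 t)).sub ((Da0 t).mul (Dτ1 t))
  have Heq : (fun s => a1 s * τ0 s - a0 s * τ1 s)
      = (fun s => (x0 s * τ1 s - x1 s * τ0 s) / 2) := funext hs
  have DG : ∀ t, HasDerivAt (fun s => (x0 s * τ1 s - x1 s * τ0 s) / 2)
      ((τ0 t * τ1 t + x0 t * a1 t - (τ1 t * τ0 t + x1 t * a0 t)) / 2) t :=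
    fun t => (((Dx0 t).mul (Dτ1 t)).sub ((Dx1 t).mul (Dτ0 t))).div_const 2
  have hH' : ∀ t, deriv (fun s => a1 s * τ0 s - a0 s * τ1 s) t
      = (a1 t * τ0 t - a0 t * τ1 t) / 2 * (x0 t * τ0 t + x1 t * τ1 t) := by
    intro t
    rw [Heq, (DG t).deriv]
    linear_combination (x0 t / 2) * ha1 t - (x1 t / 2) * ha0 t
  have hE : ∀ t, deriv a1 t * τ0 t + a1 t * a0 t - (deriv a0 t * τ1 t + a0 t * a1 t)
      = (a1 t * τ0 t - a0 t * τ1 t) / 2 * (x0 t * τ0 t + x1 t * τ1 t) :=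
    fun t => ((DH t).deriv).symm.trans (hH' t)
  have DH2 : ∀ t, HasDerivAt (fun s => a1 s * τ0 s - a0 s * τ1 s)
      ((a1 t * τ0 t - a0 t * τ1 t) / 2 * (x0 t * τ0 t + x1 t * τ1 t)) t :=
    fun t => (hE t) ▸ (DH t)
  have DP : ∀ t, HasDerivAt (fun s => x0 s * τ0 s + x1 s * τ1 s)
      ((τ0 t * τ0 t + x0 t * a0 t) + (τ1 t * τ1 t + x1 t * a1 t)) t :=
    fun t => ((Dx0 t).mul (Dτ0 t)).add ((Dx1 t).mul (Dτ1 t))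
  constructor
  · -- L H = H
    intro t
    have hfun : deriv (fun s => a1 s * τ0 s - a0 s * τ1 s)
        = fun s => (a1 s * τ0 s - a0 s * τ1 s) / 2 * (x0 s * τ0 s + x1 s * τ1 s) :=
      funext hH'
    have hdd : deriv (fun s => (a1 s * τ0 s - a0 s * τ1 s) / 2 * (x0 s * τ0 s + x1 s * τ1 s)) t
        = ((a1 t * τ0 t - a0 t * τ1 t) / 2 * (x0 t * τ0 t + x1 t * τ1 t)) / 2
            * (x0 t * τ0 t + x1 t * τ1 t)
          + (a1 t * τ0 t - a0 t * τ1 t) / 2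
            * ((τ0 t * τ0 t + x0 t * a0 t) + (τ1 t * τ1 t + x1 t * a1 t)) :=
      (((DH2 t).div_const 2).mul (DP t)).deriv
    rw [hfun, hdd]
    beta_reduce
    linear_combination ((a1 t * τ0 t - a0 t * τ1 t) / 2) * hu t
      + ((a1 t * τ0 t - a0 t * τ1 t) / 2) * hPa t
  · -- L ⟨v, n⟩ = (1/2)⟨v, n⟩
    intro v0 v1 t
    have Da1' : HasDerivAt a1
        ((a1 t * τ0 t - a0 t * τ1 t) / 2 * (x0 t * τ0 t + x1 t * τ1 t) * τ0 t
          + (a1 t * τ0 t - a0 t * τ1 t) * a0 t) t :=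
      (((DH2 t).mul (Dτ0 t))).congr_of_eventuallyEq (Filter.Eventually.of_forall ha1)
    have Da0' : HasDerivAt a0
        (-((a1 t * τ0 t - a0 t * τ1 t) / 2 * (x0 t * τ0 t + x1 t * τ1 t)) * τ1 t
          + -(a1 t * τ0 t - a0 t * τ1 t) * a1 t) t :=
      (((DH2 t).neg).mul (Dτ1 t)).congr_of_eventuallyEq (Filter.Eventually.of_forall ha0)
    have hfd : deriv (fun s => v0 * τ1 s - v1 * τ0 s) = fun s => v0 * a1 s - v1 * a0 s :=
      funext fun s => (((Dτ1 s).const_mul v0).sub ((Dτ0 s).const_mul v1)).deriv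
    have hdd : deriv (fun s => v0 * a1 s - v1 * a0 s) t
        = v0 * ((a1 t * τ0 t - a0 t * τ1 t) / 2 * (x0 t * τ0 t + x1 t * τ1 t) * τ0 t
              + (a1 t * τ0 t - a0 t * τ1 t) * a0 t)
          - v1 * (-((a1 t * τ0 t - a0 t * τ1 t) / 2 * (x0 t * τ0 t + x1 t * τ1 t)) * τ1 t
              + -(a1 t * τ0 t - a0 t * τ1 t) * a1 t) :=
      ((Da1'.const_mul v0).sub (Da0'.const_mul v1)).deriv
    have hfd1 : deriv (fun s => v0 * τ1 s - v1 * τ0 s) t = v0 * a1 t - v1 * a0 t :=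
      (((Dτ1 t).const_mul v0).sub ((Dτ0 t).const_mul v1)).deriv
    rw [hfd, hdd]
    rw [hfd] at hfd1
    have key3 : v0 * a0 t + v1 * a1 t
        = -(a1 t * τ0 t - a0 t * τ1 t) * (v0 * τ1 t - v1 * τ0 t) := by
      linear_combination v0 * ha0 t + v1 * ha1 t
    have key4 : v0 * a1 t - v1 * a0 t
        = (a1 t * τ0 t - a0 t * τ1 t) * (v0 * τ0 t + v1 * τ1 t) := by
      linear_combination v0 * ha1 t - v1 * ha0 t
    linear_combination (a1 t * τ0 t - a0 t * τ1 t) * key3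
      - ((x0 t * τ0 t + x1 t * τ1 t) / 2) * key4

/-- On a smooth unit-speed self-shrinking curve, `L H = H`, and for every
constant vector `v` the function `t ↦ ⟨v, n(t)⟩` satisfies `L f = ½ f`. -/
theorem stmt7 (γ : ℝ → E2) (hγ : ContDiff ℝ (⊤ : ℕ∞) γ)
    (hunit : ∀ t, ‖deriv γ t‖ = 1)
    (hshrink : ∀ t, curv γ t = ⟪γ t, normal γ t⟫ / 2) :
    (∀ t : ℝ, Lop γ (curv γ) t = curv γ t) ∧
    (∀ v : E2, ∀ t : ℝ,
      Lop γ (fun s => ⟪v, normal γ s⟫) t = (1/2) * ⟪v, normal γ t⟫) := by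
  have hγd : Differentiable ℝ γ := hγ.differentiable (by simp)
  have hγ's : ContDiff ℝ (⊤:ℕ∞) (deriv γ) := (contDiff_infty_iff_deriv.mp hγ).2
  have hγ'd : Differentiable ℝ (deriv γ) := hγ's.differentiable (by simp)
  have hx0 : ContDiff ℝ (⊤:ℕ∞) (fun t => γ t 0) := by
    have h := ((EuclideanSpace.proj (0 : Fin 2) : E2 →L[ℝ] ℝ).contDiff).comp hγ
    simpa [Function.comp_def] using h
  have hx1 : ContDiff ℝ (⊤:ℕ∞) (fun t => γ t 1) := by
    have h := ((EuclideanSpace.proj (1 : Fin 2) : E2 →L[ℝ] ℝ).contDiff).comp hγ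
    simpa [Function.comp_def] using h
  have e0 : ∀ t, deriv (fun s => γ s 0) t = deriv γ t 0 := fun t => deriv_proj γ 0 t (hγd t)
  have e1 : ∀ t, deriv (fun s => γ s 1) t = deriv γ t 1 := fun t => deriv_proj γ 1 t (hγd t)
  have d0 : ∀ t, deriv (deriv (fun s => γ s 0)) t = deriv (deriv γ) t 0 := fun t => by
    rw [funext e0]; exact deriv_proj (deriv γ) 0 t (hγ'd t)
  have d1 : ∀ t, deriv (deriv (fun s => γ s 1)) t = deriv (deriv γ) t 1 := fun t => by
    rw [funext e1]; exact deriv_proj (deriv γ) 1 t (hγ'd t)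
  have hcurv : ∀ t, curv γ t
      = deriv (deriv (fun s => γ s 1)) t * deriv (fun s => γ s 0) t
        - deriv (deriv (fun s => γ s 0)) t * deriv (fun s => γ s 1) t := by
    intro t
    simp [curv, normal, PiLp.inner_apply, Fin.sum_univ_two, e0, e1, d0, d1]
    ring
  have hinner : ∀ (v : E2) (t : ℝ), ⟪v, normal γ t⟫
      = v 0 * deriv (fun s => γ s 1) t - v 1 * deriv (fun s => γ s 0) t := by
    intro v t
    simp [normal, PiLp.inner_apply, Fin.sum_univ_two, e0, e1]
    ring
  have hprod : ∀ t, ⟪γ t, deriv γ t⟫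
      = γ t 0 * deriv (fun s => γ s 0) t + γ t 1 * deriv (fun s => γ s 1) t := by
    intro t
    simp [PiLp.inner_apply, Fin.sum_univ_two, e0, e1]
    ring
  have hu' : ∀ t, deriv (fun s => γ s 0) t ^ 2 + deriv (fun s => γ s 1) t ^ 2 = 1 := by
    intro t
    have h := hunit t
    rw [EuclideanSpace.norm_eq] at h
    rw [Real.sqrt_eq_one] at h
    simp [Fin.sum_univ_two, Real.norm_eq_abs, sq_abs] at h
    have h2 := h
    rw [e0, e1]
    linarith [h2]
  have hs' : ∀ t, deriv (deriv (fun s => γ s 1)) t * deriv (fun s => γ s 0) t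
      - deriv (deriv (fun s => γ s 0)) t * deriv (fun s => γ s 1) t
      = (γ t 0 * deriv (fun s => γ s 1) t - γ t 1 * deriv (fun s => γ s 0) t) / 2 := by
    intro t
    rw [← hcurv t, hshrink t, hinner (γ t) t]
  obtain ⟨C1, C2⟩ := core (fun t => γ t 0) (fun t => γ t 1) hx0 hx1 hu' hs'
  have hc : curv γ = fun s => deriv (deriv (fun u => γ u 1)) s * deriv (fun u => γ u 0) s
      - deriv (deriv (fun u => γ u 0)) s * deriv (fun u => γ u 1) s := funext hcurv
  constructor
  · intro t
    simp only [Lop, hc, hprod t]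
    exact C1 t
  · intro v t
    have hn : (fun s => ⟪v, normal γ s⟫)
        = fun s => v 0 * deriv (fun u => γ u 1) s - v 1 * deriv (fun u => γ u 0) s :=
      funext (hinner v)
    simp only [Lop, hn, hc, hprod t, hinner v t]
    exact C2 (v 0) (v 1) t
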